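/- Let C ≥ 1 be real and m, n positive integers with N = m + n. Then the lower bound formula (Cn − m)/(m + n(1 + C(n−1))) follows from the chain: ψ*_{N,m+1} ≤ (m + n(1−C))/((m+n)(1+nC)), ψ_{N,1} ≤ ((m+1)/n)·ψ*_{N,m+1}, and λ_N ≥ ((N+1)/N)/(1 + ψ_{N,1}) − 1. That is: for reals ψ*, ψ, λ satisfying ψ* ≤ (m+n(1−C))/((m+n)(1+nC)), ψ ≤ ((m+1)/n)·ψ*, and (1+λ)(1+ψ) = (N+1)/N with 1+ψ > 0, one has λ ≥ (Cn − m)/(m + n(1+C(n−1))). -/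

import Mathlib

set_option maxHeartbeats 1000000


/-- the algebraic step (eq:hofa)–(eq:bratschi) in the proof of
Theorem 4.2, with `N = m + n`. -/
theorem stmt_11 (C : ℝ) (hC : 1 ≤ C) (m n N : ℕ) (hm : 1 ≤ m) (hn : 1 ≤ n)
    (hN : N = m + n) (hmC : (m : ℝ) < C * n)
    (ψstar ψ lam : ℝ)
    (h1 : ψstar ≤ ((m : ℝ) + n * (1 - C)) / (((m : ℝ) + n) * (1 + n * C)))
    (h2 : ψ ≤ (((m : ℝ) + 1) / n) * ψstar)
    (h3 : (1 + lam) * (1 + ψ) = ((N : ℝ) + 1) / N)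
    (h4 : 0 < 1 + ψ) :
    (C * n - m) / (m + n * (1 + C * ((n : ℝ) - 1))) ≤ lam := by
  subst hN
  have hm' : (1:ℝ) ≤ m := by exact_mod_cast hm
  have hn' : (1:ℝ) ≤ n := by exact_mod_cast hn
  have hC0 : (0:ℝ) < C := lt_of_lt_of_le one_pos hC
  push_cast at h3
  set M : ℝ := (m:ℝ) with hM
  set nn : ℝ := (n:ℝ) with hnn
  have hnpos : (0:ℝ) < nn := lt_of_lt_of_le one_pos hn'
  have hNpos : (0:ℝ) < M + nn := by linarith
  have hD1 : (0:ℝ) < (M + nn) * (1 + nn * C) := by nlinarith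
  -- combined bound on ψ
  have hψb : ψ ≤ ((M + 1) / nn) * ((M + nn * (1 - C)) / ((M + nn) * (1 + nn * C))) := by
    refine h2.trans ?_
    apply mul_le_mul_of_nonneg_left h1
    positivity
  set U : ℝ := 1 + ((M + 1) / nn) * ((M + nn * (1 - C)) / ((M + nn) * (1 + nn * C))) with hU
  have hUval : U = ((M + nn) * (M + nn + 1) + nn * C * (nn * (M + nn) - M - 1)) /
      (nn * ((M + nn) * (1 + nn * C))) := by
    rw [hU]; field_simp; ring
  have hUpos : (0:ℝ) < U := by
    rw [hUval]
    apply div_pos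
    · nlinarith
    · nlinarith
  have h1ψ : 1 + ψ ≤ U := by rw [hU]; linarith
  have hlam : 1 + lam = ((M + nn + 1) / (M + nn)) / (1 + ψ) := by
    field_simp at h3 ⊢
    linarith [h3]
  have hfrac : ((M + nn + 1) / (M + nn)) / U ≤ ((M + nn + 1) / (M + nn)) / (1 + ψ) := by
    apply div_le_div_of_nonneg_left _ h4 h1ψ
    positivity
  have hDt : (0:ℝ) < M + nn * (1 + C * (nn - 1)) := by nlinarith
  have hkey : (C * nn - M) / (M + nn * (1 + C * (nn - 1))) =
      ((M + nn + 1) / (M + nn)) / U - 1 := by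
    rw [hUval]
    have h6 : (M + nn) * (M + nn + 1) + nn * C * (nn * (M + nn) - M - 1) ≠ 0 := by nlinarith
    rw [eq_sub_iff_add_eq, div_add_one hDt.ne', div_div_eq_mul_div, div_mul_eq_mul_div, div_div,
      div_eq_div_iff hDt.ne' (by positivity)]
    ring
  rw [hkey]
  linarith [hfrac, hlam]
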